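/- arXiv:1301.2725 — 5 statements merged into one kernel-verified Lean document; each statement's English description precedes it below -/
import Mathlib

section
/- Let n, n1, p, k be positive integers with k ≥ 1, n1 ≥ 1 and p ≥ 2k. Let β* ∈ ℝ^p be a vector whose support Λ* has exactly k elements, let X^A ∈ ℝ^{n×p}, e ∈ ℝ^n, and y^A = X^A β* + e. Let f : ℝ^{n+n1} → ℝ and h : ℝ^p → ℝ be convex functions satisfying the SCO Condition. Then there exist a corrupted block X^O ∈ ℝ^{n1×p} and y^O ∈ ℝ^{n1} such that, writing X = [X^A; X^O] ∈ ℝ^{(n+n1)×p} (rows of X^A on top) and y = [y^A; y^O] ∈ ℝ^{n+n1}, there exists β̂ ∈ ℝ^p with h(β̂) = h(β*), with support(β̂) disjoint from Λ*, and with f(y − X β̂) < f(y − X β̃) for every β̃ ∈ ℝ^p whose support is contained in Λ*. Consequently, for every R ≥ h(β*), no minimizer of f(y − Xβ) subject to h(β) ≤ R is supported on Λ*. -/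
/-- The regResidual `y − X β` of the stacked regression problem, where the rows are the `n`
authentic rows `(X^A, y^A)` (with `y^A = X^A β* + e`) followed by the `n1` corrupted rows
`(X^O, y^O)`. -/
def regResidual (n n1 p : ℕ) (XA : Fin n → Fin p → ℝ) (e : Fin n → ℝ) (βstar : Fin p → ℝ)
    (XO : Fin n1 → Fin p → ℝ) (yO : Fin n1 → ℝ) (β : Fin p → ℝ) : Fin n ⊕ Fin n1 → ℝ :=
  fun r =>
    Sum.elim (fun i => (∑ j, XA i j * βstar j) + e i) yO r -
      ∑ j, Sum.elim XA XO r j * β j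

lemma aux_perm {m : ℕ} (s t : Finset (Fin m)) (hd : Disjoint s t) (hc : s.card = t.card) :
    ∃ σ : Fin m → Fin m, Function.Involutive σ ∧ (∀ j ∈ s, σ j ∈ t) := by
  classical
  have e := Finset.equivOfCardEq hc
  set σ : Fin m → Fin m := fun j =>
    if h : j ∈ s then (e ⟨j, h⟩ : Fin m)
    else if h' : j ∈ t then (e.symm ⟨j, h'⟩ : Fin m) else j with hσ
  have hdl := Finset.disjoint_left.mp hd
  have hmem : ∀ j (h : j ∈ s), σ j ∈ t := fun j h => by
    simp only [hσ, dif_pos h]; exact (e ⟨j, h⟩).2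
  have hmem' : ∀ j (h : j ∈ t), σ j ∈ s := fun j h => by
    simp only [hσ, dif_neg (fun hs => hdl hs h), dif_pos h]; exact (e.symm ⟨j, h⟩).2
  refine ⟨σ, ?_, hmem⟩
  intro j
  by_cases hs : j ∈ s
  · have h1 : σ j ∈ t := hmem j hs
    have h2 : σ j ∉ s := fun hc' => hdl hc' h1
    simp only [hσ, dif_neg h2, dif_pos h1]
    simp only [hσ, dif_pos hs] at h1 ⊢
    simp
    exact fun hh => absurd hh (fun hc' => hdl hc' h1)
  · by_cases ht : j ∈ t
    · have h1 : σ j ∈ s := hmem' j ht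
      simp only [hσ, dif_pos h1]
      simp only [hσ, dif_neg hs, dif_pos ht] at h1 ⊢
      simp
    · simp only [hσ, dif_neg hs, dif_neg ht]


/-- failure of the convex optimization approach.  If `f, h` are convex and satisfy
the SCO condition, then the adversary can choose a corrupted block `(X^O, y^O)` so that some
`β̂` whose support is disjoint from the support `Λ*` of `β*` and with `h(β̂) = h(β*)` strictly
beats every vector supported on `Λ*`; consequently for every radius `R ≥ h(β*)` no minimizer of
`f(y − Xβ)` over `{h(β) ≤ R}` is supported on `Λ*`. -/
theorem stmt_0 (n n1 p k : ℕ) (hn : 0 < n) (hn1 : 1 ≤ n1) (hk : 1 ≤ k) (hp : 2 * k ≤ p)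
    (βstar : Fin p → ℝ) (hsupp : (Finset.univ.filter fun j => βstar j ≠ 0).card = k)
    (XA : Fin n → Fin p → ℝ) (e : Fin n → ℝ)
    (f : (Fin n ⊕ Fin n1 → ℝ) → ℝ) (h : (Fin p → ℝ) → ℝ)
    (hfconv : ConvexOn ℝ Set.univ f) (hhconv : ConvexOn ℝ Set.univ h)
    -- SCO condition, part (i): `f(αv) → ∞` as `α → ∞`, for every `v ≠ 0`
    (hSCO1 : ∀ v : Fin n ⊕ Fin n1 → ℝ, v ≠ 0 →
      Filter.Tendsto (fun α : ℝ => f (α • v)) Filter.atTop Filter.atTop)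
    -- SCO condition, part (ii): `f([v1; v2]) ≥ f([0; v2])`
    (hSCO2 : ∀ (v1 : Fin n → ℝ) (v2 : Fin n1 → ℝ), f (Sum.elim 0 v2) ≤ f (Sum.elim v1 v2))
    -- SCO condition, part (iii): `h` is invariant under permutations of coordinates
    (hSCO3 : ∀ (π : Equiv.Perm (Fin p)) (β : Fin p → ℝ), h (β ∘ π) = h β) :
    ∃ (XO : Fin n1 → Fin p → ℝ) (yO : Fin n1 → ℝ) (βhat : Fin p → ℝ),
      h βhat = h βstar ∧
      (∀ j, βhat j ≠ 0 → βstar j = 0) ∧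
      (∀ βtilde : Fin p → ℝ, (∀ j, βtilde j ≠ 0 → βstar j ≠ 0) →
        f (regResidual n n1 p XA e βstar XO yO βhat) <
          f (regResidual n n1 p XA e βstar XO yO βtilde)) ∧
      (∀ R : ℝ, h βstar ≤ R →
        ∀ βtilde : Fin p → ℝ, (∀ j, βtilde j ≠ 0 → βstar j ≠ 0) → h βtilde ≤ R →
          ¬ IsMinOn (fun β => f (regResidual n n1 p XA e βstar XO yO β))
              {β | h β ≤ R} βtilde) := by
  classical
  set s : Finset (Fin p) := Finset.univ.filter fun j => βstar j ≠ 0 with hs_def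
  -- find a disjoint set of the same cardinality
  have hcard_compl : k ≤ sᶜ.card := by
    have : sᶜ.card = p - k := by
      rw [Finset.card_compl, hsupp]; simp
    omega
  obtain ⟨T, hTsub, hTcard⟩ := Finset.exists_subset_card_eq hcard_compl
  have hdisj : Disjoint s T := by
    rw [Finset.disjoint_left]
    intro a ha haT
    exact (Finset.mem_compl.mp (hTsub haT)) ha
  obtain ⟨σ, hσinv, hσmap⟩ := aux_perm s T hdisj (by rw [hsupp, hTcard])
  set π : Equiv.Perm (Fin p) := hσinv.toPerm σ with hπ_def
  set βhat : Fin p → ℝ := fun j => βstar (σ j) with hβhat_def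
  -- basic properties of βhat
  have hβh : h βhat = h βstar := by
    have := hSCO3 π βstar
    exact this
  have hdisj_supp : ∀ j, βhat j ≠ 0 → βstar j = 0 := by
    intro j hj
    by_contra hne
    have hjs : j ∈ s := by simp [hs_def, hne]
    have h1 : σ j ∈ T := hσmap j hjs
    have h2 : σ j ∈ s := by simp [hs_def, hβhat_def] at hj ⊢; exact hj
    exact (Finset.disjoint_left.mp hdisj h2 h1).elim
  -- βhat ≠ 0
  have hsne : s.Nonempty := Finset.card_pos.mp (by omega)
  obtain ⟨j0, hj0⟩ := hsne
  have hβj0 : βstar j0 ≠ 0 := by simpa [hs_def] using hj0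
  have hβhat_ne : βhat (σ j0) ≠ 0 := by
    simpa [hβhat_def, hσinv j0] using hβj0
  -- c = ⟨βhat, βhat⟩ > 0
  set c : ℝ := ∑ j, βhat j * βhat j with hc_def
  have hcpos : 0 < c := by
    apply Finset.sum_pos' (fun j _ => mul_self_nonneg _)
    exact ⟨σ j0, Finset.mem_univ _, mul_self_pos.mpr hβhat_ne⟩
  -- pick the corruption magnitude
  set v : Fin n ⊕ Fin n1 → ℝ := Sum.elim 0 (fun _ => (1 : ℝ)) with hv_def
  have hi0 : (0 : ℕ) < n1 := hn1
  have hvne : v ≠ 0 := by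
    intro hv0
    have := congrFun hv0 (Sum.inr ⟨0, hi0⟩)
    simp [hv_def] at this
  set M : ℝ := f (Sum.elim (fun i => ((∑ j, XA i j * βstar j) + e i) - ∑ j, XA i j * βhat j)
      (0 : Fin n1 → ℝ)) with hM_def
  obtain ⟨α, hα⟩ := ((hSCO1 v hvne).eventually (Filter.eventually_gt_atTop M)).exists
  set t : ℝ := α / c with ht_def
  have htc : t * c = α := div_mul_cancel₀ α (ne_of_gt hcpos)
  -- the corrupted block
  set XO : Fin n1 → Fin p → ℝ := fun _ j => t * βhat j with hXO_def
  set yO : Fin n1 → ℝ := fun _ => t * c with hyO_def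
  -- residual computations
  have hsum : ∀ β : Fin p → ℝ, ∀ r : Fin n1, (∑ j, XO r j * β j) = t * ∑ j, βhat j * β j := by
    intro β r
    rw [Finset.mul_sum]
    exact Finset.sum_congr rfl fun j _ => by rw [hXO_def]; ring
  have hres : ∀ β : Fin p → ℝ,
      regResidual n n1 p XA e βstar XO yO β =
        Sum.elim (fun i => ((∑ j, XA i j * βstar j) + e i) - ∑ j, XA i j * β j)
          (fun r => t * c - t * ∑ j, βhat j * β j) := by
    intro β
    funext r
    cases r with
    | inl i => simp [regResidual]
    | inr r => simp [regResidual, hsum β r, hyO_def]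
  -- residual of βhat
  have hres_hat : f (regResidual n n1 p XA e βstar XO yO βhat) = M := by
    rw [hres βhat, hM_def]
    congr 1
    funext r
    cases r with
    | inl i => simp
    | inr r => simp [hc_def]
  -- residual of βtilde
  have hmain : ∀ βtilde : Fin p → ℝ, (∀ j, βtilde j ≠ 0 → βstar j ≠ 0) →
      f (regResidual n n1 p XA e βstar XO yO βhat) <
        f (regResidual n n1 p XA e βstar XO yO βtilde) := by
    intro βtilde hsuppt
    have hip : (∑ j, βhat j * βtilde j) = 0 := by
      apply Finset.sum_eq_zero
      intro j _
      by_cases hbe : βtilde j = 0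
      · rw [hbe, mul_zero]
      · have hbh : βhat j = 0 := by
          by_contra hbh
          exact (hsuppt j hbe) (hdisj_supp j hbh)
        rw [hbh, zero_mul]
    have hresb : regResidual n n1 p XA e βstar XO yO βtilde =
        Sum.elim (fun i => ((∑ j, XA i j * βstar j) + e i) - ∑ j, XA i j * βtilde j)
          (fun _ => α) := by
      rw [hres βtilde]
      congr 1
      funext r
      rw [hip, mul_zero, sub_zero, htc]
    rw [hres_hat, hresb]
    calc M < f (α • v) := hα
      _ = f (Sum.elim 0 (fun _ => α)) := by
          congr 1
          funext r
          cases r <;> simp [hv_def]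
      _ ≤ _ := hSCO2 _ _
  refine ⟨XO, yO, βhat, hβh, hdisj_supp, hmain, ?_⟩
  intro R hR βtilde hsuppt hhle hmin
  have hmem : βhat ∈ {β | h β ≤ R} := by simp [Set.mem_setOf_eq, hβh]; exact hR
  have := hmin hmem
  exact absurd this (not_le.mpr (hmain βtilde hsuppt))
end

section
/- Let n, n1, k, p be positive integers with k ≥ 4, p ≥ k + 1, n1 ≤ n, and n1 ≥ 4n/(k+1). Let Λ* = {1,…,k}, and let β* ∈ ℝ^p have β*_j = 1 for j ∈ Λ* and 0 otherwise. Let X^A ∈ ℝ^{n×p}, e ∈ ℝ^n, and y^A = X^A β* + e. Define y^O ∈ ℝ^{n1} by y^O_i = √k, and X^O ∈ ℝ^{n1×p} by X^O_{i,k+1} = √k and X^O_{i,j} = 0 for j ≠ k+1. Let X = [X^A; X^O] ∈ ℝ^{(n+n1)×p}, y = [y^A; y^O] ∈ ℝ^{n+n1}, Ŝ = {n1+1, …, n+n1}, Λ̂ = {2, …, k+1}, θ̂ = (1,…,1) ∈ ℝ^k, and T = {n1+1, …, n}. Assume (i) ‖e + X^A_{Λ*} δ‖₂² ≥ (1 −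 1/k) k for every δ ∈ ℝ^k, and (ii) ‖e_T + (X^A_{·,1})_T − (X^A_{·,k+1})_T‖₂² ≤ (1 + 1/k)(1 − n1/n)(k + 2), where v_T denotes the restriction of a vector to the coordinates in T and X^A_{·,j} the j-th column of X^A. Then for every set S ⊆ {1, …, n+n1} with |S| = n and every θ ∈ ℝ^k, ‖y_Ŝ − X_{Ŝ,Λ̂} θ̂‖₂ < ‖y_S − X_{S,Λ*} θ‖₂. In particular, no solution of the brute force problem with column set Λ* is optimal. -/
/-- deterministic core of the brute-force failure theorem.  With the specific
corruption `y^O_i = √k`, `X^O_{·,k+1} = √k e_{k+1}` (columns indexed from `1`; here `0`-indexed,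
so column `k`), and under the two norm bounds (i) and (ii), the alternative solution
`(θ̂ = 𝟙, Ŝ = {n1+1,…,n+n1}, Λ̂ = {2,…,k+1})` strictly beats every brute-force solution using
the true column set `Λ* = {1,…,k}`. -/
theorem stmt_10 (n n1 k p : ℕ) (hk : 4 ≤ k) (hp : k + 1 ≤ p) (hn : 0 < n)
    (hn1n : n1 ≤ n) (hn1 : 4 * n ≤ n1 * (k + 1))
    (XA : Fin n → Fin p → ℝ) (e : Fin n → ℝ)
    (βstar : Fin p → ℝ) (hβstar : ∀ j : Fin p, βstar j = if (j : ℕ) < k then 1 else 0)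
    (yO : Fin n1 → ℝ) (hyO : ∀ i, yO i = Real.sqrt k)
    (XO : Fin n1 → Fin p → ℝ)
    (hXO : ∀ (i : Fin n1) (j : Fin p), XO i j = if (j : ℕ) = k then Real.sqrt k else 0)
    -- hypothesis (i): ‖e + X^A_{Λ*} δ‖₂² ≥ (1 − 1/k) k for every δ supported on Λ*
    (hi : ∀ δ : Fin p → ℝ, (∀ j : Fin p, δ j ≠ 0 → (j : ℕ) < k) →
      (1 - 1 / (k : ℝ)) * k ≤ ∑ i, (e i + ∑ j, XA i j * δ j) ^ 2)
    -- hypothesis (ii): ‖e_T + (X^A_{·,1})_T − (X^A_{·,k+1})_T‖₂² ≤ (1 + 1/k)(1 − n1/n)(k + 2)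
    (hii : ∑ i ∈ Finset.univ.filter (fun i : Fin n => n1 ≤ (i : ℕ)),
        (e i + XA i ⟨0, by omega⟩ - XA i ⟨k, by omega⟩) ^ 2 ≤
      (1 + 1 / (k : ℝ)) * (1 - (n1 : ℝ) / n) * ((k : ℝ) + 2)) :
    ∀ S : Finset (Fin n ⊕ Fin n1), S.card = n →
      ∀ βtilde : Fin p → ℝ, (∀ j : Fin p, βtilde j ≠ 0 → (j : ℕ) < k) →
        Real.sqrt (∑ r ∈ ((Finset.univ.filter fun i : Fin n => n1 ≤ (i : ℕ)).image Sum.inl ∪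
              Finset.univ.image Sum.inr),
            (Sum.elim (fun i => (∑ j, XA i j * βstar j) + e i) yO r -
              ∑ j, Sum.elim XA XO r j *
                (if 1 ≤ (j : ℕ) ∧ (j : ℕ) ≤ k then (1 : ℝ) else 0)) ^ 2) <
          Real.sqrt (∑ r ∈ S,
            (Sum.elim (fun i => (∑ j, XA i j * βstar j) + e i) yO r -
              ∑ j, Sum.elim XA XO r j * βtilde j) ^ 2) := by
  intro S hS βtilde hβt
  have hkp : 0 < k := by omega
  have hk0 : (0:ℝ) < k := by exact_mod_cast hkp
  have hn0 : (0:ℝ) < n := by exact_mod_cast hn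
  have hkR : (4:ℝ) ≤ k := by exact_mod_cast hk
  set j0 : Fin p := ⟨0, by omega⟩ with hj0def
  set jk : Fin p := ⟨k, by omega⟩ with hjkdef
  -- sum of XO row against any weight
  have hXOsum : ∀ (i : Fin n1) (w : Fin p → ℝ),
      ∑ j, XO i j * w j = Real.sqrt k * w jk := by
    intro i w
    rw [Finset.sum_eq_single jk]
    · rw [hXO]; simp [hjkdef]
    · intro j _ hj
      have : (j : ℕ) ≠ k := fun h => hj (Fin.ext h)
      rw [hXO]; simp [this]
    · simp
  have hβtk : βtilde jk = 0 := by
    by_contra h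
    have := hβt jk h
    simp [hjkdef] at this
  -- key: difference of the two row sums on the XA side, for the hat solution
  have key : ∀ i : Fin n,
      (∑ j, XA i j * βstar j) -
        (∑ j, XA i j * (if 1 ≤ (j : ℕ) ∧ (j : ℕ) ≤ k then (1 : ℝ) else 0)) =
      XA i j0 - XA i jk := by
    intro i
    rw [← Finset.sum_sub_distrib]
    have hj0v : ((j0 : Fin p) : ℕ) = 0 := rfl
    have hjkv : ((jk : Fin p) : ℕ) = k := rfl
    have : ∀ j : Fin p,
        XA i j * βstar j - XA i j * (if 1 ≤ (j : ℕ) ∧ (j : ℕ) ≤ k then (1 : ℝ) else 0) =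
        (if j = j0 then XA i j else 0) - (if j = jk then XA i j else 0) := by
      intro j
      rw [hβstar]
      rcases Nat.lt_or_ge (j : ℕ) k with hj | hj
      · rcases Nat.eq_zero_or_pos (j : ℕ) with h0 | h0
        · have hjj0 : j = j0 := Fin.ext (by rw [hj0v]; exact h0)
          have hjjk : j ≠ jk := by
            intro hcon; have := congrArg Fin.val hcon; rw [hjkv] at this; omega
          have c2 : ¬ (1 ≤ (j : ℕ) ∧ (j : ℕ) ≤ k) := by omega
          rw [if_pos hj, if_neg c2, if_pos hjj0, if_neg hjjk]; ring
        · have hjj0 : j ≠ j0 := by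
            intro hcon; have := congrArg Fin.val hcon; rw [hj0v] at this; omega
          have hjjk : j ≠ jk := by
            intro hcon; have := congrArg Fin.val hcon; rw [hjkv] at this; omega
          have c2 : 1 ≤ (j : ℕ) ∧ (j : ℕ) ≤ k := ⟨h0, le_of_lt hj⟩
          rw [if_pos hj, if_pos c2, if_neg hjj0, if_neg hjjk]; ring
      · rcases Nat.eq_or_lt_of_le hj with hjk2 | hjk2
        · have hjjk : j = jk := Fin.ext (by rw [hjkv]; omega)
          have hjj0 : j ≠ j0 := by
            intro hcon; have := congrArg Fin.val hcon; rw [hj0v] at this; omega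
          have h1 : ¬ (j : ℕ) < k := by omega
          have h2 : 1 ≤ (j : ℕ) ∧ (j : ℕ) ≤ k := by omega
          rw [if_neg h1, if_pos h2, if_neg hjj0, if_pos hjjk]; ring
        · have hjj0 : j ≠ j0 := by
            intro hcon; have := congrArg Fin.val hcon; rw [hj0v] at this; omega
          have hjjk : j ≠ jk := by
            intro hcon; have := congrArg Fin.val hcon; rw [hjkv] at this; omega
          have h1 : ¬ (j : ℕ) < k := by omega
          have h2 : ¬ (1 ≤ (j : ℕ) ∧ (j : ℕ) ≤ k) := by omega
          rw [if_neg h1, if_neg h2, if_neg hjj0, if_neg hjjk]; ring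
    rw [Finset.sum_congr rfl (fun j _ => this j), Finset.sum_sub_distrib,
      Finset.sum_ite_eq' Finset.univ j0 (XA i), Finset.sum_ite_eq' Finset.univ jk (XA i)]
    simp
  -- evaluate the LHS sum
  set f : (Fin n ⊕ Fin n1) → ℝ := fun r =>
    (Sum.elim (fun i => (∑ j, XA i j * βstar j) + e i) yO r -
      ∑ j, Sum.elim XA XO r j *
        (if 1 ≤ (j : ℕ) ∧ (j : ℕ) ≤ k then (1 : ℝ) else 0)) ^ 2 with hfdef
  have hdisj : Disjoint ((Finset.univ.filter fun i : Fin n => n1 ≤ (i : ℕ)).image Sum.inl)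
      ((Finset.univ.image Sum.inr : Finset (Fin n ⊕ Fin n1))) := by
    rw [Finset.disjoint_left]
    rintro r hr1 hr2
    simp only [Finset.mem_image] at hr1 hr2
    obtain ⟨a, _, ha⟩ := hr1
    obtain ⟨b, _, hb⟩ := hr2
    rw [← ha] at hb; exact Sum.inl_ne_inr hb.symm
  have hLHS : ∑ r ∈ ((Finset.univ.filter fun i : Fin n => n1 ≤ (i : ℕ)).image Sum.inl ∪
        Finset.univ.image Sum.inr), f r =
      ∑ i ∈ Finset.univ.filter (fun i : Fin n => n1 ≤ (i : ℕ)),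
        (e i + XA i j0 - XA i jk) ^ 2 := by
    rw [Finset.sum_union hdisj,
      Finset.sum_image (fun a _ b _ h => Sum.inl_injective h),
      Finset.sum_image (fun a _ b _ h => Sum.inr_injective h)]
    have hz : ∀ i : Fin n1, f (Sum.inr i) = 0 := by
      intro i
      simp only [hfdef, Sum.elim_inr, hXOsum]
      rw [hyO]
      have : (if 1 ≤ (jk : ℕ) ∧ (jk : ℕ) ≤ k then (1:ℝ) else 0) = 1 := by
        simp [hjkdef]; omega
      rw [this, mul_one, sub_self]
      norm_num
    rw [Finset.sum_congr rfl (fun i _ => hz i), Finset.sum_const_zero, add_zero]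
    refine Finset.sum_congr rfl (fun i _ => ?_)
    simp only [hfdef, Sum.elim_inl]
    rw [show (∑ j, XA i j * βstar j) + e i -
        (∑ j, XA i j * (if 1 ≤ (j : ℕ) ∧ (j : ℕ) ≤ k then (1 : ℝ) else 0)) =
        e i + ((∑ j, XA i j * βstar j) -
          (∑ j, XA i j * (if 1 ≤ (j : ℕ) ∧ (j : ℕ) ≤ k then (1 : ℝ) else 0))) by ring,
      key i]
    ring_nf
  -- numeric bound on the LHS
  have hnum : (1 + 1 / (k : ℝ)) * (1 - (n1 : ℝ) / n) * ((k : ℝ) + 2) < (k : ℝ) - 1 := by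
    have h4 : (4:ℝ) * n ≤ (n1 : ℝ) * ((k:ℝ) + 1) := by exact_mod_cast hn1
    have hfrac : (1 + 1 / (k : ℝ)) * (1 - (n1 : ℝ) / n) * ((k : ℝ) + 2) =
        (((k:ℝ) + 1) * ((n:ℝ) - n1) * ((k:ℝ) + 2)) / ((k:ℝ) * n) := by
      field_simp
      try ring
    rw [hfrac, div_lt_iff₀ (by positivity)]
    nlinarith [mul_le_mul_of_nonneg_left h4 (show (0:ℝ) ≤ (k:ℝ) + 2 by linarith)]
  have hLHSlt : ∑ r ∈ ((Finset.univ.filter fun i : Fin n => n1 ≤ (i : ℕ)).image Sum.inl ∪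
        Finset.univ.image Sum.inr), f r < (k : ℝ) - 1 := by
    rw [hLHS]; exact lt_of_le_of_lt hii hnum
  -- the RHS function
  set g : (Fin n ⊕ Fin n1) → ℝ := fun r =>
    (Sum.elim (fun i => (∑ j, XA i j * βstar j) + e i) yO r -
      ∑ j, Sum.elim XA XO r j * βtilde j) ^ 2 with hgdef
  have hginr : ∀ i : Fin n1, g (Sum.inr i) = (k : ℝ) := by
    intro i
    simp only [hgdef, Sum.elim_inr, hXOsum, hβtk, mul_zero, sub_zero, hyO]
    exact Real.sq_sqrt (le_of_lt hk0)
  -- lower bound on the RHS sum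
  have hRHS : (k : ℝ) - 1 ≤ ∑ r ∈ S, g r := by
    classical
    have hsplit : ∑ r ∈ S.filter (fun r => r.isLeft) , g r +
        ∑ r ∈ S.filter (fun r => ¬ r.isLeft), g r = ∑ r ∈ S, g r :=
      Finset.sum_filter_add_sum_filter_not S _ g
    have hgnonneg : ∀ r ∈ S.filter (fun r => r.isLeft), 0 ≤ g r := by
      intro r _; positivity
    rcases Finset.eq_empty_or_nonempty (S.filter (fun r => ¬ r.isLeft)) with hemp | hne
    · -- all rows of S are inl rows; S contains all of them
      have hcardL : (S.filter (fun r => r.isLeft)).card = n := by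
        have := Finset.card_filter_add_card_filter_not
          (s := S) (p := fun r => r.isLeft = true)
        rw [hemp] at this; simpa [hS] using this
      have hfull : S.filter (fun r => r.isLeft) =
          (Finset.univ.image Sum.inl : Finset (Fin n ⊕ Fin n1)) := by
        apply Finset.eq_of_subset_of_card_le
        · intro r hr
          rw [Finset.mem_filter] at hr
          rcases r with i | i
          · exact Finset.mem_image.mpr ⟨i, Finset.mem_univ i, rfl⟩
          · simp at hr
        · rw [Finset.card_image_of_injective _ Sum.inl_injective, Finset.card_univ,
            Fintype.card_fin, hcardL]
      have hδ : ∀ j : Fin p, (βstar j - βtilde j) ≠ 0 → (j : ℕ) < k := by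
        intro j hj
        by_contra hcon
        push_neg at hcon
        have h1 : βstar j = 0 := by rw [hβstar]; simp; omega
        have h2 : βtilde j = 0 := by
          by_contra h2; exact absurd (hβt j h2) (by omega)
        rw [h1, h2, sub_zero] at hj; exact hj rfl
      have hmain : (1 - 1 / (k : ℝ)) * k ≤ ∑ r ∈ S.filter (fun r => r.isLeft), g r := by
        rw [hfull, Finset.sum_image (fun a _ b _ h => Sum.inl_injective h)]
        have : ∀ i : Fin n, g (Sum.inl i) =
            (e i + ∑ j, XA i j * (βstar j - βtilde j)) ^ 2 := by
          intro i
          simp only [hgdef, Sum.elim_inl]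
          congr 1
          rw [Finset.sum_congr rfl (fun j _ => mul_sub (XA i j) (βstar j) (βtilde j)),
            Finset.sum_sub_distrib]
          ring
        rw [Finset.sum_congr rfl (fun i _ => this i)]
        exact hi _ hδ
      have heq : (1 - 1 / (k : ℝ)) * k = (k : ℝ) - 1 := by field_simp
      rw [← hsplit, hemp, Finset.sum_empty, add_zero]
      rw [heq] at hmain; exact hmain
    · -- S contains an inr row, contributing k
      obtain ⟨r, hr⟩ := hne
      have hr' := hr
      rw [Finset.mem_filter] at hr'
      rcases r with i | i
      · simp at hr'
      · have hsingle : (k : ℝ) ≤ ∑ r ∈ S.filter (fun r => ¬ r.isLeft), g r := by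
          have := Finset.single_le_sum (f := g)
            (fun r _ => by positivity) hr
          rw [hginr i] at this; exact this
        have h0 : 0 ≤ ∑ r ∈ S.filter (fun r => r.isLeft), g r :=
          Finset.sum_nonneg hgnonneg
        rw [← hsplit]; linarith
  -- conclude
  apply Real.sqrt_lt_sqrt
  · apply Finset.sum_nonneg; intro r _; positivity
  · exact lt_of_lt_of_le hLHSlt hRHS
end

section
/- Let N and n1 be integers with 0 ≤ n1 ≤ N, let a, b ∈ ℝ^N, and let A ⊆ {1,…,N} be a nonempty set with |{1,…,N} \ A| ≤ n1. Let h = Σ_{i∈Ω} a_i b_i be a trimmed inner product of a and b with parameter n1, i.e., Ω ⊆ {1,…,N} with |Ω| = N − n1 and |a_i b_i| ≤ |a_j b_j| for every i ∈ Ω and j ∉ Ω. Then | h − Σ_{i∈A} a_i b_i | ≤ 2 n1 · max_{i∈A} |a_i b_i|. -/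
/-- a trimmed inner product with parameter `n1` deviates from the inner product over
the authentic index set `A` (whose complement has at most `n1` elements) by at most
`2 n1 max_{i ∈ A} |a_i b_i|`. -/
theorem stmt_12 (N n1 : ℕ) (hn1 : n1 ≤ N) (a b : Fin N → ℝ)
    (A : Finset (Fin N)) (hA : A.Nonempty) (hAc : (Finset.univ \ A).card ≤ n1)
    (h : ℝ) (Om : Finset (Fin N)) (hOmcard : Om.card = N - n1)
    (hOmtrim : ∀ i ∈ Om, ∀ j, j ∉ Om → |a i * b i| ≤ |a j * b j|)
    (hsum : h = ∑ i ∈ Om, a i * b i) :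
    |h - ∑ i ∈ A, a i * b i| ≤ 2 * n1 * A.sup' hA (fun i => |a i * b i|) := by
  set M := A.sup' hA (fun i => |a i * b i|) with hM
  have hMnonneg : 0 ≤ M := by
    obtain ⟨i, hi⟩ := hA
    refine le_trans (abs_nonneg (a i * b i)) ?_
    rw [hM]; exact Finset.le_sup' (fun i => |a i * b i|) hi
  have hMle : ∀ i ∈ A, |a i * b i| ≤ M := by
    intro i hi; rw [hM]; exact Finset.le_sup' (fun i => |a i * b i|) hi
  have hdiff : h - ∑ i ∈ A, a i * b i =
      (∑ i ∈ Om \ A, a i * b i) - ∑ i ∈ A \ Om, a i * b i := by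
    rw [hsum, Finset.sum_sdiff_sub_sum_sdiff]
  by_cases hcase : (A \ Om).Nonempty
  · obtain ⟨j, hj⟩ := hcase
    have hjA : j ∈ A := (Finset.mem_sdiff.mp hj).1
    have hjOm : j ∉ Om := (Finset.mem_sdiff.mp hj).2
    -- bounds on terms
    have hbound1 : ∀ i ∈ Om \ A, |a i * b i| ≤ M := by
      intro i hi
      have := hOmtrim i (Finset.mem_sdiff.mp hi).1 j hjOm
      exact this.trans (hMle j hjA)
    have hbound2 : ∀ i ∈ A \ Om, |a i * b i| ≤ M :=
      fun i hi => hMle i (Finset.mem_sdiff.mp hi).1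
    -- card bounds
    have hc1 : (Om \ A).card ≤ n1 := by
      refine le_trans (Finset.card_le_card ?_) hAc
      intro i hi
      simp only [Finset.mem_sdiff, Finset.mem_univ, true_and]
      exact (Finset.mem_sdiff.mp hi).2
    have hc2 : (A \ Om).card ≤ n1 := by
      have : (A \ Om).card ≤ (Finset.univ \ Om).card :=
        Finset.card_le_card (fun i hi => by
          simp only [Finset.mem_sdiff, Finset.mem_univ, true_and]
          exact (Finset.mem_sdiff.mp hi).2)
      have hcu : (Finset.univ \ Om).card = n1 := by
        rw [Finset.card_sdiff_of_subset (Finset.subset_univ _), hOmcard, Finset.card_univ,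
          Fintype.card_fin]
        omega
      omega
    have habs1 : |∑ i ∈ Om \ A, a i * b i| ≤ n1 * M := by
      calc |∑ i ∈ Om \ A, a i * b i| ≤ ∑ i ∈ Om \ A, |a i * b i| :=
            Finset.abs_sum_le_sum_abs _ _
        _ ≤ ∑ _i ∈ Om \ A, M := Finset.sum_le_sum hbound1
        _ = (Om \ A).card * M := by rw [Finset.sum_const, nsmul_eq_mul]
        _ ≤ n1 * M := by
            exact mul_le_mul_of_nonneg_right (by exact_mod_cast hc1) hMnonneg
    have habs2 : |∑ i ∈ A \ Om, a i * b i| ≤ n1 * M := by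
      calc |∑ i ∈ A \ Om, a i * b i| ≤ ∑ i ∈ A \ Om, |a i * b i| :=
            Finset.abs_sum_le_sum_abs _ _
        _ ≤ ∑ _i ∈ A \ Om, M := Finset.sum_le_sum hbound2
        _ = (A \ Om).card * M := by rw [Finset.sum_const, nsmul_eq_mul]
        _ ≤ n1 * M := by
            exact mul_le_mul_of_nonneg_right (by exact_mod_cast hc2) hMnonneg
    rw [hdiff]
    calc |(∑ i ∈ Om \ A, a i * b i) - ∑ i ∈ A \ Om, a i * b i|
        ≤ |∑ i ∈ Om \ A, a i * b i| + |∑ i ∈ A \ Om, a i * b i| := abs_sub _ _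
      _ ≤ n1 * M + n1 * M := add_le_add habs1 habs2
      _ = 2 * n1 * M := by ring
  · -- A \ Om empty ⟹ A ⊆ Om, but |A| ≥ N - n1 = |Om|, so A = Om
    have hsub : A ⊆ Om := by
      intro i hi
      by_contra hnot
      exact hcase ⟨i, Finset.mem_sdiff.mpr ⟨hi, hnot⟩⟩
    have hAcard : N - n1 ≤ A.card := by
      have := Finset.card_sdiff_add_card_eq_card (Finset.subset_univ A)
      simp only [Finset.card_univ, Fintype.card_fin] at this
      omega
    have hAeq : A = Om := Finset.eq_of_subset_of_card_le hsub (by omega)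
    rw [hdiff, hAeq]
    simp [mul_nonneg (mul_nonneg (by norm_num : (0:ℝ) ≤ 2) (Nat.cast_nonneg n1)) hMnonneg]
end

section
/- Let p, k be positive integers with k ≤ p, let β ∈ ℝ^p have support Λ* with |Λ*| = k, let ε ≥ 0, and let h : {1,…,p} → ℝ satisfy |h(j) − β_j| ≤ ε for all j. Assume min_{j ∈ Λ*} |β_j| > 2ε. Then every set Λ̂ ⊆ {1,…,p} with |Λ̂| = k such that |h(j)| ≥ |h(j')| for all j ∈ Λ̂ and j' ∉ Λ̂ satisfies Λ̂ = Λ*. -/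
/-- if `h` approximates `β` uniformly within `ε` and every nonzero entry of `β`
exceeds `2ε` in absolute value, then any top-`k` set of `|h|` equals the support of `β`
(which is assumed to have exactly `k` elements). -/
theorem stmt_13 (p k : ℕ) (hk : 0 < k) (hkp : k ≤ p)
    (β : Fin p → ℝ) (ε : ℝ) (hε : 0 ≤ ε)
    (hcard : (Finset.univ.filter fun j => β j ≠ 0).card = k)
    (h : Fin p → ℝ) (happrox : ∀ j, |h j - β j| ≤ ε)
    (hmin : ∀ j, β j ≠ 0 → 2 * ε < |β j|)
    (Λ : Finset (Fin p)) (hΛcard : Λ.card = k)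
    (htop : ∀ j ∈ Λ, ∀ j', j' ∉ Λ → |h j'| ≤ |h j|) :
    Λ = Finset.univ.filter fun j => β j ≠ 0 := by
  set S := Finset.univ.filter fun j => β j ≠ 0 with hS
  have hsub : S ⊆ Λ := by
    intro j hj
    by_contra hjΛ
    have hjβ : β j ≠ 0 := (Finset.mem_filter.mp hj).2
    -- Λ is not a subset of S, else Λ = S (equal cards) contradicting j ∈ S \ Λ
    have hne : ∃ j'' ∈ Λ, j'' ∉ S := by
      by_contra hc
      push_neg at hc
      have : Λ = S := Finset.eq_of_subset_of_card_le hc (by rw [hcard, hΛcard])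
      exact hjΛ (this ▸ hj)
    obtain ⟨j'', hj''Λ, hj''S⟩ := hne
    have hβ0 : β j'' = 0 := by
      by_contra hb
      exact hj''S (Finset.mem_filter.mpr ⟨Finset.mem_univ _, hb⟩)
    have h1 : |h j''| ≤ ε := by
      have := happrox j''
      rwa [hβ0, sub_zero] at this
    have h2 : ε < |h j| := by
      have hb := hmin j hjβ
      have ha := happrox j
      have : |β j| - |h j - β j| ≤ |h j| := by
        have := abs_sub_abs_le_abs_sub (β j) (h j)
        rw [abs_sub_comm] at this
        linarith
      linarith
    have := htop j'' hj''Λ j hjΛ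
    linarith
  exact (Finset.eq_of_subset_of_card_le hsub (by rw [hcard, hΛcard])).symm
end

section
/- Let p, k be positive integers with k ≤ p, let β ∈ ℝ^p have support of size at most k, let 0 ≤ a < 1 and b ≥ 0, and let h : {1,…,p} → ℝ satisfy |h(j) − β_j| ≤ a|β_j| + b for all j. Let Λ̂ ⊆ {1,…,p} with |Λ̂| = k be such that |h(j)| ≥ |h(j')| for all j ∈ Λ̂ and j' ∉ Λ̂, and define β̂ ∈ ℝ^p by β̂_j = h(j) for j ∈ Λ̂ and β̂_j = 0 otherwise. Then ‖β̂ − β‖₂ ≤ a ‖β‖₂ + 4 √k · b / (1 − a). -/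
set_option maxHeartbeats 2000000 in
/-- deterministic ℓ₂ error bound for the hard-thresholded estimator built from
approximate coefficients `h(j)` with `|h(j) − β_j| ≤ a|β_j| + b`, using a top-`k` index set. -/
theorem stmt_14 (p k : ℕ) (hk : 0 < k) (hkp : k ≤ p)
    (β : Fin p → ℝ) (hcard : (Finset.univ.filter fun j => β j ≠ 0).card ≤ k)
    (a b : ℝ) (ha0 : 0 ≤ a) (ha1 : a < 1) (hb : 0 ≤ b)
    (h : Fin p → ℝ) (happrox : ∀ j, |h j - β j| ≤ a * |β j| + b)
    (Λ : Finset (Fin p)) (hΛcard : Λ.card = k)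
    (htop : ∀ j ∈ Λ, ∀ j', j' ∉ Λ → |h j'| ≤ |h j|)
    (βhat : Fin p → ℝ) (hβhat : βhat = fun j => if j ∈ Λ then h j else 0) :
    Real.sqrt (∑ j, (βhat j - β j) ^ 2) ≤
      a * Real.sqrt (∑ j, (β j) ^ 2) + 4 * Real.sqrt k * b / (1 - a) := by
  subst hβhat
  have h1a : (0:ℝ) < 1 - a := by linarith
  set S := Finset.univ.filter (fun j => β j ≠ 0) with hS
  set c : ℝ := 2 * b / (1 - a) with hc
  have hc0 : 0 ≤ c := by positivity
  -- every index outside Λ has small |β j|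
  have key : ∀ j, j ∉ Λ → |β j| ≤ c := by
    intro j hj
    by_cases hβj : β j = 0
    · simp [hβj, hc0]
    · have hex : ∃ i ∈ Λ, β i = 0 := by
        by_contra hcon
        push_neg at hcon
        have hsub : Λ ⊆ S.erase j := by
          intro i hi
          refine Finset.mem_erase.2 ⟨?_, ?_⟩
          · rintro rfl; exact hj hi
          · simp [hS, hcon i hi]
        have h1 := Finset.card_le_card hsub
        have hje : j ∈ S := by simp [hS, hβj]
        have h2 : (S.erase j).card < S.card := Finset.card_erase_lt_of_mem hje
        omega
      obtain ⟨i, hiΛ, hi0⟩ := hex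
      have hhi : |h i| ≤ b := by
        have := happrox i; rw [hi0] at this; simpa using this
      have hhj : |h j| ≤ b := (htop i hiΛ j hj).trans hhi
      have h3 := happrox j
      have h4 : |β j| - |h j| ≤ |β j - h j| := abs_sub_abs_le_abs_sub _ _
      rw [abs_sub_comm] at h4
      rw [hc, le_div_iff₀ h1a]
      nlinarith [abs_nonneg (β j)]
  -- split the sum
  have hsplit : ∑ j, ((if j ∈ Λ then h j else 0) - β j) ^ 2 =
      (∑ j ∈ Λ, (h j - β j) ^ 2) + ∑ j ∈ Λᶜ, (β j) ^ 2 := by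
    rw [← Finset.sum_add_sum_compl Λ]
    congr 1
    · exact Finset.sum_congr rfl fun j hj => by simp [hj]
    · refine Finset.sum_congr rfl fun j hj => ?_
      rw [Finset.mem_compl] at hj
      simp [hj]
  set N := Real.sqrt (∑ j, (β j) ^ 2) with hN
  set sk := Real.sqrt k with hsk
  have hN0 : 0 ≤ N := Real.sqrt_nonneg _
  have hsk0 : 0 ≤ sk := Real.sqrt_nonneg _
  have hNsq : N ^ 2 = ∑ j, (β j) ^ 2 := Real.sq_sqrt (by positivity)
  have hsksq : sk ^ 2 = (k : ℝ) := Real.sq_sqrt (by positivity)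
  -- bound on Λ
  have hX : (∑ j ∈ Λ, (h j - β j) ^ 2) ≤ (a * N + sk * b) ^ 2 := by
    have hstep : ∀ j ∈ Λ, (h j - β j) ^ 2 ≤ (a * |β j| + b) ^ 2 := by
      intro j _
      have := happrox j
      have h1 : (h j - β j) ^ 2 = |h j - β j| ^ 2 := (sq_abs _).symm
      rw [h1]
      have h2 : 0 ≤ |h j - β j| := abs_nonneg _
      nlinarith
    have h1 : (∑ j ∈ Λ, (h j - β j) ^ 2) ≤ ∑ j ∈ Λ, (a * |β j| + b) ^ 2 :=
      Finset.sum_le_sum hstep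
    have hCS : (∑ j ∈ Λ, |β j| * 1) ≤
        Real.sqrt (∑ j ∈ Λ, |β j| ^ 2) * Real.sqrt (∑ j ∈ Λ, (1:ℝ) ^ 2) :=
      Real.sum_mul_le_sqrt_mul_sqrt Λ _ _
    have hones : (∑ j ∈ Λ, (1:ℝ) ^ 2) = (k : ℝ) := by
      simp [hΛcard]
    have hβsq : (∑ j ∈ Λ, |β j| ^ 2) ≤ ∑ j, (β j) ^ 2 := by
      have : (∑ j ∈ Λ, |β j| ^ 2) = ∑ j ∈ Λ, (β j) ^ 2 := by
        exact Finset.sum_congr rfl fun j _ => sq_abs _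
      rw [this]
      exact Finset.sum_le_sum_of_subset_of_nonneg (Finset.subset_univ _)
        (fun j _ _ => sq_nonneg _)
    have hsqrtmono : Real.sqrt (∑ j ∈ Λ, |β j| ^ 2) ≤ N := Real.sqrt_le_sqrt hβsq
    have hCS2 : (∑ j ∈ Λ, |β j|) ≤ N * sk := by
      have h5 : Real.sqrt (∑ j ∈ Λ, |β j| ^ 2) * Real.sqrt (∑ j ∈ Λ, (1:ℝ) ^ 2) ≤ N * sk := by
        rw [hones]
        exact mul_le_mul_of_nonneg_right hsqrtmono (Real.sqrt_nonneg _)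
      calc (∑ j ∈ Λ, |β j|) = ∑ j ∈ Λ, |β j| * 1 := by simp
        _ ≤ _ := hCS
        _ ≤ N * sk := h5
    have hexp : (∑ j ∈ Λ, (a * |β j| + b) ^ 2) =
        a ^ 2 * (∑ j ∈ Λ, |β j| ^ 2) + 2 * a * b * (∑ j ∈ Λ, |β j|) + (k : ℝ) * b ^ 2 := by
      rw [Finset.sum_congr rfl (fun j _ => by ring :
        ∀ j ∈ Λ, (a * |β j| + b) ^ 2 = a ^ 2 * |β j| ^ 2 + 2 * a * b * |β j| + b ^ 2)]
      rw [Finset.sum_add_distrib, Finset.sum_add_distrib, ← Finset.mul_sum, ← Finset.mul_sum]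
      simp [hΛcard, mul_comm]
    have hβsq' : (∑ j ∈ Λ, |β j| ^ 2) ≤ N ^ 2 := by rw [hNsq]; exact hβsq
    refine h1.trans ?_
    rw [hexp, ← hsksq]
    have t1 : a ^ 2 * (∑ j ∈ Λ, |β j| ^ 2) ≤ a ^ 2 * N ^ 2 :=
      mul_le_mul_of_nonneg_left hβsq' (sq_nonneg a)
    have t2 : 2 * a * b * (∑ j ∈ Λ, |β j|) ≤ 2 * a * b * (N * sk) :=
      mul_le_mul_of_nonneg_left hCS2 (by positivity)
    nlinarith [t1, t2]
  -- bound off Λ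
  have hY : (∑ j ∈ Λᶜ, (β j) ^ 2) ≤ (sk * c) ^ 2 := by
    have h1 : (∑ j ∈ Λᶜ, (β j) ^ 2) = ∑ j ∈ Λᶜ.filter (fun j => β j ≠ 0), (β j) ^ 2 := by
      rw [Finset.sum_filter_of_ne]
      intro j _ hne
      intro h0
      exact hne (by rw [h0]; ring)
    have h2 : ∀ j ∈ Λᶜ.filter (fun j => β j ≠ 0), (β j) ^ 2 ≤ c ^ 2 := by
      intro j hj
      rw [Finset.mem_filter, Finset.mem_compl] at hj
      have := key j hj.1
      nlinarith [abs_nonneg (β j), sq_abs (β j)]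
    have h3 : (∑ j ∈ Λᶜ.filter (fun j => β j ≠ 0), (β j) ^ 2) ≤
        (Λᶜ.filter (fun j => β j ≠ 0)).card * c ^ 2 := by
      calc (∑ j ∈ Λᶜ.filter (fun j => β j ≠ 0), (β j) ^ 2)
          ≤ ∑ _j ∈ Λᶜ.filter (fun j => β j ≠ 0), c ^ 2 := Finset.sum_le_sum h2
        _ = (Λᶜ.filter (fun j => β j ≠ 0)).card * c ^ 2 := by
            rw [Finset.sum_const, nsmul_eq_mul]
    have h4 : (Λᶜ.filter (fun j => β j ≠ 0)).card ≤ k := by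
      refine le_trans (Finset.card_le_card ?_) hcard
      intro j hj
      rw [Finset.mem_filter] at hj
      simp [hS, hj.2]
    have h5 : ((Λᶜ.filter (fun j => β j ≠ 0)).card : ℝ) * c ^ 2 ≤ (k : ℝ) * c ^ 2 := by
      have : ((Λᶜ.filter (fun j => β j ≠ 0)).card : ℝ) ≤ (k : ℝ) := by exact_mod_cast h4
      nlinarith
    rw [h1]
    calc _ ≤ _ := h3
      _ ≤ (k:ℝ) * c ^ 2 := h5
      _ = (sk * c) ^ 2 := by rw [mul_pow, hsksq]
  -- combine
  have hAB0 : 0 ≤ a * N + sk * b := add_nonneg (mul_nonneg ha0 hN0) (mul_nonneg hsk0 hb)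
  have hsum : (∑ j, ((if j ∈ Λ then h j else 0) - β j) ^ 2) ≤ ((a * N + sk * b) + sk * c) ^ 2 := by
    rw [hsplit]
    have hexpand : ((a * N + sk * b) + sk * c) ^ 2 =
        (a * N + sk * b) ^ 2 + 2 * ((a * N + sk * b) * (sk * c)) + (sk * c) ^ 2 := by ring
    have hcross : 0 ≤ (a * N + sk * b) * (sk * c) :=
      mul_nonneg hAB0 (mul_nonneg hsk0 hc0)
    linarith [hX, hY]
  have hfinal : Real.sqrt (∑ j, ((if j ∈ Λ then h j else 0) - β j) ^ 2) ≤
      (a * N + sk * b) + sk * c := by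
    have := Real.sqrt_le_sqrt hsum
    rwa [Real.sqrt_sq (add_nonneg hAB0 (mul_nonneg hsk0 hc0))] at this
  refine hfinal.trans ?_
  have hbd : b ≤ b / (1 - a) := by
    rw [le_div_iff₀ h1a]; exact mul_le_of_le_one_right hb (by linarith)
  have hbd0 : 0 ≤ b / (1 - a) := by positivity
  have hrw : 4 * sk * b / (1 - a) = sk * (4 * (b / (1 - a))) := by ring
  have hcrw : c = 2 * (b / (1 - a)) := by rw [hc]; ring
  rw [hrw, hcrw]
  have t1 : sk * b ≤ sk * (b / (1 - a)) := mul_le_mul_of_nonneg_left hbd hsk0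
  have t2 : 0 ≤ sk * (b / (1 - a)) := mul_nonneg hsk0 hbd0
  have e1 : sk * (2 * (b / (1 - a))) = 2 * (sk * (b / (1 - a))) := by ring
  have e2 : sk * (4 * (b / (1 - a))) = 4 * (sk * (b / (1 - a))) := by ring
  rw [e1, e2]
  linarith
end
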